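/- Let G be a hyperbolic group with finite symmetric generating set S and word length |·|, and let C be a conjugacy class of G. Then exactly one of the following holds: either the set {C^d : d ∈ ℕ} of conjugacy classes is finite (equivalently sup_d |C^d| < ∞), or there exists a constant K > 0 such that |C^d| ≥ K·d for every d ≥ 1, where C^d = {x^d : x ∈ C} and |C'| = min{|x| : x ∈ C'} for a conjugacy class C'. -/

import Mathlib

/-- The word length of `g` with respect to the generating set `S`. -/
noncomputable def wordLength {G : Type*} [Group G] (S : Set G) (g : G) : ℕ :=
  sInf {n | ∃ l : List G, (∀ x ∈ l, x ∈ S) ∧ l.prod = g ∧ l.length = n}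

/-- `|C| = min {|x| : x ∈ C}`, the minimal word length in a conjugacy class `C`. -/
noncomputable def minConjLength {G : Type*} [Group G] (S : Set G) (C : Set G) : ℕ :=
  sInf (wordLength S '' C)

/-- The Gromov product for the word metric on `G` with respect to `S`. -/
noncomputable def wordGromovProd {G : Type*} [Group G] (S : Set G) (x y z : G) : ℝ :=
  ((wordLength S (x⁻¹ * z) : ℝ) + (wordLength S (y⁻¹ * z) : ℝ) - (wordLength S (x⁻¹ * y) : ℝ)) / 2

/-- The word metric of `(G,S)` satisfies the four-point condition with constant `δ`. -/
def FourPointWith {G : Type*} [Group G] (S : Set G) (δ : ℝ) : Prop :=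
  ∀ x y z w : G,
    min (wordGromovProd S x z w) (wordGromovProd S y z w) ≤ wordGromovProd S x y w + δ

/-- `G` is Gromov-hyperbolic with respect to `S`: its word metric satisfies the four-point
condition for some `δ ≥ 0`. -/
def IsHyperbolicWith {G : Type*} [Group G] (S : Set G) : Prop :=
  ∃ δ : ℝ, 0 ≤ δ ∧ FourPointWith S δ

section Aux
variable {G : Type*} [Group G] {S : Set G}

lemma exists_rep (hSsymm : ∀ s ∈ S, s⁻¹ ∈ S) (hSgen : Subgroup.closure S = ⊤) (g : G) :
    ∃ l : List G, (∀ x ∈ l, x ∈ S) ∧ l.prod = g := by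
  have hg : g ∈ Subgroup.closure S := by rw [hSgen]; trivial
  induction hg using Subgroup.closure_induction with
  | mem x hx => exact ⟨[x], by simpa using hx, by simp⟩
  | one => exact ⟨[], by simp, by simp⟩
  | mul x y hx hy ihx ihy =>
    obtain ⟨l1, h1, p1⟩ := ihx
    obtain ⟨l2, h2, p2⟩ := ihy
    refine ⟨l1 ++ l2, ?_, by simp [p1, p2]⟩
    intro a ha
    rcases List.mem_append.mp ha with h | h
    exacts [h1 a h, h2 a h]
  | inv x hx ihx =>
    obtain ⟨l, h1, p1⟩ := ihx
    refine ⟨(l.map fun x => x⁻¹).reverse, ?_, ?_⟩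
    · intro a ha
      simp only [List.mem_reverse, List.mem_map] at ha
      obtain ⟨b, hb, rfl⟩ := ha
      exact hSsymm b (h1 b hb)
    · rw [← List.prod_inv_reverse, p1]

lemma wl_le {g : G} {l : List G} (hl : ∀ x ∈ l, x ∈ S) (hp : l.prod = g) :
    wordLength S g ≤ l.length :=
  Nat.sInf_le ⟨l, hl, hp, rfl⟩

lemma wl_spec (hSsymm : ∀ s ∈ S, s⁻¹ ∈ S) (hSgen : Subgroup.closure S = ⊤) (g : G) :
    ∃ l : List G, (∀ x ∈ l, x ∈ S) ∧ l.prod = g ∧ l.length = wordLength S g := by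
  have hne : {n | ∃ l : List G, (∀ x ∈ l, x ∈ S) ∧ l.prod = g ∧ l.length = n}.Nonempty := by
    obtain ⟨l, hl, hp⟩ := exists_rep hSsymm hSgen g
    exact ⟨l.length, l, hl, hp, rfl⟩
  exact Nat.sInf_mem hne

lemma wl_one : wordLength S (1 : G) = 0 :=
  Nat.le_zero.mp (wl_le (l := []) (by simp) (by simp))

lemma wl_mul (hSsymm : ∀ s ∈ S, s⁻¹ ∈ S) (hSgen : Subgroup.closure S = ⊤) (g h : G) :
    wordLength S (g * h) ≤ wordLength S g + wordLength S h := by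
  obtain ⟨l1, h1, p1, n1⟩ := wl_spec hSsymm hSgen g
  obtain ⟨l2, h2, p2, n2⟩ := wl_spec hSsymm hSgen h
  calc wordLength S (g * h) ≤ (l1 ++ l2).length := wl_le
        (by intro a ha; rcases List.mem_append.mp ha with h | h; exacts [h1 a h, h2 a h])
        (by simp [p1, p2])
    _ = _ := by simp [n1, n2]

lemma wl_inv_le (hSsymm : ∀ s ∈ S, s⁻¹ ∈ S) (hSgen : Subgroup.closure S = ⊤) (g : G) :
    wordLength S g⁻¹ ≤ wordLength S g := by
  obtain ⟨l, hl, p, n⟩ := wl_spec hSsymm hSgen g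
  calc wordLength S g⁻¹ ≤ ((l.map fun x => x⁻¹).reverse).length := wl_le
        (by intro a ha; simp only [List.mem_reverse, List.mem_map] at ha
            obtain ⟨b, hb, rfl⟩ := ha; exact hSsymm b (hl b hb))
        (by rw [← List.prod_inv_reverse, p])
    _ = _ := by simp [n]

lemma wl_inv (hSsymm : ∀ s ∈ S, s⁻¹ ∈ S) (hSgen : Subgroup.closure S = ⊤) (g : G) :
    wordLength S g⁻¹ = wordLength S g :=
  le_antisymm (wl_inv_le hSsymm hSgen g)
    (by simpa using wl_inv_le hSsymm hSgen g⁻¹)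

lemma wl_pow (hSsymm : ∀ s ∈ S, s⁻¹ ∈ S) (hSgen : Subgroup.closure S = ⊤) (g : G) (k : ℕ) :
    wordLength S (g ^ k) ≤ k * wordLength S g := by
  induction k with
  | zero => simp [wl_one]
  | succ k ih =>
    calc wordLength S (g ^ (k+1)) ≤ wordLength S (g ^ k) + wordLength S g := by
          rw [pow_succ]; exact wl_mul hSsymm hSgen _ _
      _ ≤ k * wordLength S g + wordLength S g := by omega
      _ = (k+1) * wordLength S g := by ring

lemma ball_finite (hSfin : S.Finite) (hSsymm : ∀ s ∈ S, s⁻¹ ∈ S)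
    (hSgen : Subgroup.closure S = ⊤) (R : ℕ) :
    {g : G | wordLength S g ≤ R}.Finite := by
  induction R with
  | zero =>
    apply Set.Finite.subset (Set.finite_singleton (1 : G))
    intro g hg
    simp only [Set.mem_setOf_eq, Nat.le_zero] at hg
    obtain ⟨l, hl, hp, hn⟩ := wl_spec hSsymm hSgen g
    rw [hg] at hn
    rw [List.length_eq_zero_iff] at hn
    simp [hn] at hp
    simp [← hp]
  | succ R ih =>
    apply Set.Finite.subset ((hSfin.biUnion (fun s _ => ih.image (fun h => s * h))).union
      (Set.finite_singleton (1 : G)))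
    intro g hg
    simp only [Set.mem_setOf_eq] at hg
    obtain ⟨l, hl, hp, hn⟩ := wl_spec hSsymm hSgen g
    match l, hn with
    | [], hn => simp at hp; simp [← hp]
    | s :: t, hn =>
      left
      simp only [Set.mem_iUnion]
      refine ⟨s, hl s (by simp), ?_⟩
      refine ⟨t.prod, ?_, by simpa using hp.symm ▸ rfl⟩
      · have : wordLength S t.prod ≤ t.length := wl_le (fun a ha => hl a (by simp [ha])) rfl
        simp only [Set.mem_setOf_eq]
        have : t.length ≤ R := by simp at hn; omega
        omega

end Aux

section Geo
variable {G : Type*} [Group G] {S : Set G}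

lemma shortest_exists (hSsymm : ∀ s ∈ S, s⁻¹ ∈ S) (hSgen : Subgroup.closure S = ⊤) (a : G) :
    ∃ h : G, IsConj a h ∧ wordLength S h = minConjLength S {y | IsConj a y} ∧
      ∀ y : G, IsConj a y → wordLength S h ≤ wordLength S y := by
  have hne : (wordLength S '' {y | IsConj a y}).Nonempty :=
    ⟨wordLength S a, a, IsConj.refl a, rfl⟩
  obtain ⟨h, hh, hwl⟩ := Nat.sInf_mem hne
  refine ⟨h, hh, hwl, fun y hy => ?_⟩
  rw [hwl]
  exact Nat.sInf_le ⟨y, hy, rfl⟩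

lemma sq_lower (hSsymm : ∀ s ∈ S, s⁻¹ ∈ S) (hSgen : Subgroup.closure S = ⊤)
    {δ : ℝ} (hδ : 0 ≤ δ) (hfp : FourPointWith S δ) {h : G}
    (hmin : ∀ y : G, IsConj h y → wordLength S h ≤ wordLength S y)
    (hn : 8*δ + 2 ≤ (wordLength S h : ℝ)) :
    2*(wordLength S h : ℝ) - 6*δ ≤ (wordLength S (h*h) : ℝ) := by
  obtain ⟨l, hl, hp, hlen⟩ := wl_spec hSsymm hSgen h
  set n := wordLength S h with hn_def
  set k := n / 2 with hk
  set m := (l.take k).prod with hm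
  -- basic length facts
  have ha_le : wordLength S m ≤ k := by
    have h1 := wl_le (l := l.take k) (fun x hx => hl x (List.mem_of_mem_take hx)) rfl
    calc wordLength S m ≤ (l.take k).length := h1
      _ ≤ k := by simp [List.length_take]
  have hb_le : wordLength S (m⁻¹ * h) ≤ n - k := by
    have hsplit : l.prod = (l.take k).prod * (l.drop k).prod := by
      rw [← List.prod_append, List.take_append_drop]
    have hprod : (l.drop k).prod = m⁻¹ * h := by
      rw [hm, ← hp, hsplit]; group
    have h1 := wl_le (l := l.drop k) (fun x hx => hl x (List.mem_of_mem_drop hx)) hprod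
    calc wordLength S (m⁻¹ * h) ≤ (l.drop k).length := h1
      _ ≤ n - k := by simp [List.length_drop, hlen]
  set a := wordLength S m with ha_def
  set b := wordLength S (m⁻¹ * h) with hb_def
  have hab : a + b = n := by
    have h1 : n ≤ a + b := by
      have : wordLength S (m * (m⁻¹ * h)) ≤ a + b := wl_mul hSsymm hSgen _ _
      simpa [mul_assoc] using this
    omega
  have ha2 : 2 * a ≤ n := by omega
  have hb2 : 2 * b ≤ n + 1 := by omega
  -- conjugate h' = m⁻¹ * h * m
  have hconj : IsConj h (m⁻¹ * (h * m)) := by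
    rw [isConj_iff]
    exact ⟨m⁻¹, by group⟩
  have hH : n ≤ wordLength S (m⁻¹ * (h * m)) := hmin _ hconj
  -- real abbreviations
  set N : ℝ := (n : ℝ) with hN
  set A : ℝ := (a : ℝ) with hA
  set B : ℝ := (b : ℝ) with hB
  set H : ℝ := (wordLength S (m⁻¹ * (h * m)) : ℝ) with hH_def
  set M : ℝ := (wordLength S (h * m) : ℝ) with hM
  set T : ℝ := (wordLength S (h * h) : ℝ) with hT
  have hNA : 2*A ≤ N := by rw [hN, hA]; exact_mod_cast ha2
  have hNB : 2*B ≤ N + 1 := by rw [hN, hB]; push_cast; exact_mod_cast hb2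
  have hABN : A + B = N := by rw [hN, hA, hB]; exact_mod_cast hab
  have hNH : N ≤ H := by rw [hN, hH_def]; exact_mod_cast hH
  have hA0 : 0 ≤ A := by rw [hA]; positivity
  have hB0 : 0 ≤ B := by rw [hB]; positivity
  -- rewriting helpers
  have winv := wl_inv hSsymm hSgen (G := G)
  -- step 1
  have s1 : (A + H - M) / 2 ≤ δ := by
    have inst := hfp 1 h (h*m) m
    simp only [wordGromovProd] at inst
    rw [show (1:G)⁻¹ * m = m by group] at inst
    rw [show (h*m)⁻¹ * m = (m⁻¹ * (h * m))⁻¹ by group, winv] at inst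
    rw [show (1:G)⁻¹ * (h*m) = h*m by group] at inst
    rw [show h⁻¹ * m = (m⁻¹ * h)⁻¹ by group, winv] at inst
    rw [show h⁻¹ * (h*m) = m by group] at inst
    rw [show (1:G)⁻¹ * h = h by group] at inst
    rw [← hA, ← hB, ← hH_def, ← hM, ← hN] at inst
    rcases min_le_iff.mp inst with hc | hc
    · linarith
    · linarith
  -- step 2
  have s2 : (B + H - (wordLength S ((h*h)⁻¹ * m) : ℝ)) / 2 ≤ δ := by
    have inst := hfp (h*h) h m (h*m)
    simp only [wordGromovProd] at inst
    rw [show (h*h)⁻¹ * (h*m) = (m⁻¹ * h)⁻¹ by group, winv] at inst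
    rw [show m⁻¹ * (h*m) = m⁻¹ * (h * m) from rfl] at inst
    rw [show h⁻¹ * (h*m) = m by group] at inst
    rw [show h⁻¹ * m = (m⁻¹ * h)⁻¹ by group, winv] at inst
    rw [show (h*h)⁻¹ * h = h⁻¹ by group, winv] at inst
    rw [← hA, ← hB, ← hH_def, ← hN] at inst
    rcases min_le_iff.mp inst with hc | hc
    · linarith
    · linarith
  -- step 3
  have s3 : (B + M - T) / 2 ≤ 2*δ := by
    have inst := hfp (h*h) m 1 (h*m)
    simp only [wordGromovProd] at inst
    rw [show (h*h)⁻¹ * (h*m) = (m⁻¹ * h)⁻¹ by group, winv] at inst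
    rw [show (1:G)⁻¹ * (h*m) = h*m by group] at inst
    rw [show (h*h)⁻¹ * (1:G) = (h*h)⁻¹ by group, winv] at inst
    rw [show m⁻¹ * (1:G) = m⁻¹ by group, winv] at inst
    rw [show m⁻¹ * (h*m) = m⁻¹ * (h * m) from rfl] at inst
    rw [← hA, ← hB, ← hH_def, ← hM, ← hT] at inst
    rcases min_le_iff.mp inst with hc | hc
    · linarith
    · linarith
  linarith

end Geo

section Geo2
variable {G : Type*} [Group G] {S : Set G}

lemma pow_lower (hSsymm : ∀ s ∈ S, s⁻¹ ∈ S) (hSgen : Subgroup.closure S = ⊤)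
    {δ : ℝ} (hδ : 0 ≤ δ) (hfp : FourPointWith S δ) {h : G}
    (hmin : ∀ y : G, IsConj h y → wordLength S h ≤ wordLength S y)
    (hn : 8*δ + 2 ≤ (wordLength S h : ℝ)) :
    ∀ d : ℕ, 1 ≤ d →
      (d:ℝ) * ((wordLength S h : ℝ) - 8*δ) ≤ (wordLength S (h^d) : ℝ) := by
  have hsq := sq_lower hSsymm hSgen hδ hfp hmin hn
  set N := (wordLength S h : ℝ) with hNdef
  have winv := wl_inv hSsymm hSgen (G := G)
  have hp : ∀ i : ℕ, 1 ≤ i →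
      (N + (wordLength S (h^i) : ℝ) - (wordLength S (h^(i+1)) : ℝ)) / 2 ≤ 4*δ := by
    intro i hi
    induction i, hi using Nat.le_induction with
    | base =>
      rw [pow_one, show h^(1+1) = h*h by rw [pow_succ, pow_one]]
      linarith
    | succ i hi ih =>
      have inst := hfp (h^(i+1+1)) (h^i) 1 (h^(i+1))
      simp only [wordGromovProd] at inst
      rw [show (h^(i+1+1))⁻¹ * h^(i+1) = h⁻¹ by rw [pow_succ]; group, winv] at inst
      rw [show (1:G)⁻¹ * h^(i+1) = h^(i+1) by group] at inst
      rw [show (h^(i+1+1))⁻¹ * (1:G) = (h^(i+1+1))⁻¹ by group, winv] at inst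
      rw [show (h^i)⁻¹ * h^(i+1) = h by rw [pow_succ]; group] at inst
      rw [show (h^i)⁻¹ * (1:G) = (h^i)⁻¹ by group, winv] at inst
      rw [show (h^(i+1+1))⁻¹ * h^i = (h*h)⁻¹ by rw [pow_succ, pow_succ]; group, winv] at inst
      rw [← hNdef] at inst
      rcases min_le_iff.mp inst with hc | hc
      · linarith
      · linarith
  intro d hd
  induction d, hd using Nat.le_induction with
  | base => rw [pow_one]; push_cast; linarith
  | succ d hd ih =>
    have := hp d hd
    push_cast
    push_cast at ih
    linarith

end Geo2

/-- Let `G` be hyperbolic with finite symmetric generating set `S` and `C`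
the conjugacy class of `x₀`. Exactly one of the following holds: either the set
`{C^d : d ∈ ℕ}` of conjugacy classes is finite, or there is `K > 0` with `|C^d| ≥ K·d` for
every `d ≥ 1`. -/
theorem stmt12 {G : Type*} [Group G] (S : Set G) (hSfin : S.Finite)
    (hSsymm : ∀ s ∈ S, s⁻¹ ∈ S) (hSgen : Subgroup.closure S = ⊤)
    (hhyp : IsHyperbolicWith S) (x₀ : G) :
    Xor' (Set.Finite {D : Set G | ∃ d : ℕ, D = {y | IsConj (x₀ ^ d) y}})
      (∃ K : ℝ, 0 < K ∧ ∀ d : ℕ, 1 ≤ d →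
        K * d ≤ (minConjLength S {y | IsConj (x₀ ^ d) y} : ℝ)) := by
  obtain ⟨δ, hδ, hfp⟩ := hhyp
  have winv := wl_inv hSsymm hSgen (G := G)
  by_cases hcase : ∃ d : ℕ, 1 ≤ d ∧
      8*δ + 2 ≤ (minConjLength S {y | IsConj (x₀ ^ d) y} : ℝ)
  · -- linear growth case
    obtain ⟨d₀, hd₀, hlen⟩ := hcase
    obtain ⟨h, hconj, hwl, hminh⟩ := shortest_exists hSsymm hSgen (x₀ ^ d₀)
    have hmin' : ∀ y, IsConj h y → wordLength S h ≤ wordLength S y := fun y hy =>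
      hminh y (hconj.trans hy)
    have hn : 8*δ + 2 ≤ (wordLength S h : ℝ) := by rw [hwl]; exact hlen
    have hpow := pow_lower hSsymm hSgen hδ hfp hmin' hn
    have hk2 : ∀ k : ℕ, 1 ≤ k → 2*k ≤ wordLength S (h^k) := by
      intro k hk
      have h1 : (2:ℝ) ≤ (wordLength S h : ℝ) - 8*δ := by linarith
      have h2 : (k:ℝ) * 2 ≤ (k:ℝ) * ((wordLength S h : ℝ) - 8*δ) :=
        mul_le_mul_of_nonneg_left h1 (by positivity)
      have h3 : ((2*k : ℕ) : ℝ) ≤ (wordLength S (h^k) : ℝ) := by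
        push_cast
        linarith [hpow k hk]
      exact_mod_cast h3
    -- core natural-number inequality
    have core : ∀ d : ℕ, 1 ≤ d →
        2*d ≤ d₀ * minConjLength S {y | IsConj (x₀ ^ d) y} := by
      intro d hd
      obtain ⟨hd', hdconj, hdwl, hdmin⟩ := shortest_exists hSsymm hSgen (x₀ ^ d)
      rw [← hdwl]
      set L := wordLength S hd' with hL
      obtain ⟨c, hc⟩ := isConj_iff.mp hconj
      obtain ⟨e, he⟩ := isConj_iff.mp hdconj
      set u := c * e⁻¹ with hu
      set U := wordLength S u with hU
      have hrel : ∀ m : ℕ, h ^ (d*m) = u * hd' ^ (d₀*m) * u⁻¹ := by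
        intro m
        rw [← hc, ← he, conj_pow, conj_pow, ← pow_mul, ← pow_mul,
          show d₀ * (d*m) = d * (d₀*m) by ring, hu]
        group
      have hub : ∀ m : ℕ, wordLength S (h^(d*m)) ≤ 2*U + d₀*m*L := by
        intro m
        rw [hrel m]
        calc wordLength S (u * hd' ^ (d₀*m) * u⁻¹)
            ≤ wordLength S (u * hd' ^ (d₀*m)) + wordLength S u⁻¹ :=
              wl_mul hSsymm hSgen _ _
          _ ≤ wordLength S u + wordLength S (hd' ^ (d₀*m)) + wordLength S u⁻¹ := by
              have := wl_mul hSsymm hSgen u (hd' ^ (d₀*m)); omega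
          _ ≤ U + (d₀*m) * L + U := by
              have hwp := wl_pow hSsymm hSgen hd' (d₀*m)
              rw [← hL] at hwp
              rw [winv u]; omega
          _ = 2*U + d₀*m*L := by ring
      by_contra hcon
      push_neg at hcon
      have ht : d₀ * L + 1 ≤ 2*d := hcon
      set m := 2*U + 1 with hm
      have hm1 : 1 ≤ d*m := Nat.one_le_iff_ne_zero.mpr (by positivity)
      have h1 : 2*(d*m) ≤ 2*U + d₀*m*L := le_trans (hk2 (d*m) hm1) (hub m)
      have h2 : (d₀*L + 1) * m ≤ (2*d) * m := Nat.mul_le_mul_right m ht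
      have e1 : (d₀*L + 1) * m = d₀*L*m + m := by ring
      have e2 : (2*d)*m = 2*(d*m) := by ring
      have e3 : d₀*m*L = d₀*L*m := by ring
      -- combine: d₀*L*m + m ≤ 2*(d*m) ≤ 2*U + d₀*L*m, so m ≤ 2*U, contradiction
      have : d₀*L*m + m ≤ 2*U + d₀*L*m := by
        rw [← e1, ← e3]
        calc (d₀*L + 1) * m ≤ (2*d)*m := h2
          _ = 2*(d*m) := e2
          _ ≤ 2*U + d₀*m*L := h1
      omega
    refine Or.inr ⟨⟨2/(d₀:ℝ), by positivity, ?_⟩, ?_⟩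
    · intro d hd
      have hcast : (2*d : ℝ) ≤ (d₀:ℝ) * (minConjLength S {y | IsConj (x₀ ^ d) y} : ℝ) := by
        exact_mod_cast core d hd
      rw [div_mul_eq_mul_div, div_le_iff₀ (by positivity)]
      linarith
    · intro hfin
      obtain ⟨M, hM⟩ := (hfin.image (minConjLength S)).bddAbove
      set d := d₀*M + 1 with hd
      have hmem : minConjLength S {y | IsConj (x₀ ^ d) y} ∈
          minConjLength S '' {D : Set G | ∃ d : ℕ, D = {y | IsConj (x₀ ^ d) y}} :=
        ⟨_, ⟨d, rfl⟩, rfl⟩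
      have hle : minConjLength S {y | IsConj (x₀ ^ d) y} ≤ M := hM hmem
      have h1 := core d (by omega)
      have h2 : d₀ * minConjLength S {y | IsConj (x₀ ^ d) y} ≤ d₀ * M :=
        Nat.mul_le_mul_left d₀ hle
      have h3 : 2*(d₀*M+1) ≤ d₀*M := by omega
      omega
  · -- bounded case
    push_neg at hcase
    set R := Nat.ceil (8*δ + 2) with hR
    have hmcR : ∀ d : ℕ, minConjLength S {y | IsConj (x₀ ^ d) y} ≤ R := by
      intro d
      rcases Nat.eq_zero_or_pos d with h0 | h1
      · subst h0
        have h4 : minConjLength S {y | IsConj (x₀ ^ 0) y} ≤ wordLength S (x₀ ^ 0) :=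
          Nat.sInf_le ⟨x₀ ^ 0, IsConj.refl _, rfl⟩
        have h5 : wordLength S (x₀ ^ 0) = 0 := by rw [pow_zero]; exact wl_one
        omega
      · have hlt := hcase d h1
        have : (minConjLength S {y | IsConj (x₀ ^ d) y} : ℝ) < (R : ℝ) :=
          lt_of_lt_of_le hlt (Nat.le_ceil _)
        exact_mod_cast this.le
    classical
    set σ : Set G → G := fun D =>
      if hD : ∃ y, y ∈ D ∧ wordLength S y = minConjLength S D then hD.choose else 1 with hσdef
    have hσ : ∀ d : ℕ, σ {y | IsConj (x₀ ^ d) y} ∈ {y | IsConj (x₀ ^ d) y} ∧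
        wordLength S (σ {y | IsConj (x₀ ^ d) y}) =
          minConjLength S {y | IsConj (x₀ ^ d) y} := by
      intro d
      obtain ⟨h, hconj, hwl, -⟩ := shortest_exists hSsymm hSgen (x₀ ^ d)
      have hD : ∃ y, y ∈ {y | IsConj (x₀ ^ d) y} ∧
          wordLength S y = minConjLength S {y | IsConj (x₀ ^ d) y} := ⟨h, hconj, hwl⟩
      rw [hσdef]
      simp only [dif_pos hD]
      exact hD.choose_spec
    have hfin : Set.Finite {D : Set G | ∃ d : ℕ, D = {y | IsConj (x₀ ^ d) y}} := by
      apply Set.Finite.of_finite_image (f := σ)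
      · apply Set.Finite.subset (ball_finite hSfin hSsymm hSgen R)
        rintro y ⟨D, ⟨d, rfl⟩, rfl⟩
        have := (hσ d).2
        simp only [Set.mem_setOf_eq]
        rw [this]
        exact hmcR d
      · rintro D1 ⟨d1, rfl⟩ D2 ⟨d2, rfl⟩ heq
        have h1 := (hσ d1).1
        have h2 := (hσ d2).1
        rw [heq] at h1
        simp only [Set.mem_setOf_eq] at h1 h2
        ext z
        simp only [Set.mem_setOf_eq]
        exact ⟨fun hz => h2.trans (h1.symm.trans hz), fun hz => h1.trans (h2.symm.trans hz)⟩
    refine Or.inl ⟨hfin, ?_⟩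
    rintro ⟨K, hK, hKle⟩
    set d := max 1 (Nat.ceil ((8*δ + 2)/K)) with hd
    have hd1 : 1 ≤ d := le_max_left _ _
    have hdge : ((8*δ + 2)/K : ℝ) ≤ (d : ℝ) := by
      calc ((8*δ + 2)/K : ℝ) ≤ (Nat.ceil ((8*δ + 2)/K) : ℝ) := Nat.le_ceil _
        _ ≤ (d : ℝ) := by exact_mod_cast le_max_right _ _
    have h1 : 8*δ + 2 ≤ K * d := by
      rw [← div_le_iff₀' hK]
      exact hdge
    have h2 := hKle d hd1
    have h3 := hcase d hd1
    linarith
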